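/- Feng–Rao bound: let C_l = C_L(D, h_l P) be a one-point AG code where h₁ = 0 < h₂ < ... enumerates the Weierstrass semigroup H(P). Define ν_l = #{(i,j) ∈ ℕ² : h_i + h_j = h_{l+1}}. If c is a codeword in C_l^⊥ ∖ C_{l+1}^⊥, then the Hamming weight of c is at least ν_l. -/

import Mathlib

open scoped Classical

/-- Abstract data of a projective, irreducible, non-singular algebraic curve over
a finite field `𝔽_q`, as used for algebraic geometry codes: the base finite
field `F`, the function field `K`, the points, principal divisors, the genus,
and evaluation of rational functions at (rational) points, together with the
standard facts relating them. Divisors are finitely supported `ℤ`-valued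
functions on the points. -/
structure CodingCurve where
  /-- the base finite field `𝔽_q` -/
  F : Type
  [fieldF : Field F]
  [fintypeF : Fintype F]
  /-- the function field of the curve -/
  K : Type
  [fieldK : Field K]
  [algebraFK : Algebra F K]
  /-- the (closed) points of the curve -/
  Point : Type
  /-- the principal divisor `div f` of a nonzero rational function
  (with the convention `divOf 0 = 0`); its coefficient at `P` is `v_P(f)`. -/
  divOf : K → (Point →₀ ℤ)
  divOf_one : divOf 1 = 0
  divOf_mul : ∀ f g : K, f ≠ 0 → g ≠ 0 → divOf (f * g) = divOf f + divOf g
  divOf_deg_zero : ∀ f : K, f ≠ 0 → ((divOf f).sum fun _ n => n) = 0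
  divOf_algebraMap : ∀ c : F, c ≠ 0 → divOf (algebraMap F K c) = 0
  /-- membership in the Riemann–Roch space `L(G)` is closed under addition -/
  memL_add : ∀ (G : Point →₀ ℤ) (f g : K),
    (f = 0 ∨ 0 ≤ divOf f + G) → (g = 0 ∨ 0 ≤ divOf g + G) →
      (f + g = 0 ∨ 0 ≤ divOf (f + g) + G)
  /-- membership in the Riemann–Roch space `L(G)` is closed under scalars -/
  memL_smul : ∀ (G : Point →₀ ℤ) (c : F) (f : K),
    (f = 0 ∨ 0 ≤ divOf f + G) → (c • f = 0 ∨ 0 ≤ divOf (c • f) + G)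
  /-- the genus of the curve -/
  genus : ℕ
  /-- Riemann's inequality: `L(D)` contains at least `deg D + 1 - g` linearly
  independent functions. -/
  riemann_ineq : ∀ (D : Point →₀ ℤ) (N : ℕ),
    (N : ℤ) ≤ (D.sum fun _ n => n) + 1 - genus →
      ∃ s : Fin N → K, LinearIndependent F s ∧
        ∀ i, s i = 0 ∨ 0 ≤ divOf (s i) + D
  /-- evaluation `f(P)` of a rational function at a rational point (meaningful
  when `f` is regular at `P`, i.e. `v_P(f) ≥ 0`). -/
  eval : Point → K → F
  eval_zero : ∀ P : Point, eval P 0 = 0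
  eval_add : ∀ (P : Point) (f g : K),
    0 ≤ divOf f P → 0 ≤ divOf g P → eval P (f + g) = eval P f + eval P g
  eval_smul : ∀ (P : Point) (c : F) (f : K), eval P (c • f) = c * eval P f
  eval_algebraMap : ∀ (P : Point) (c : F), eval P (algebraMap F K c) = c
  /-- a nonzero function regular at `P` evaluates to `0` at `P` iff it has a
  zero at `P`. -/
  eval_eq_zero_iff : ∀ (P : Point) (f : K), f ≠ 0 → 0 ≤ divOf f P →
    (eval P f = 0 ↔ 1 ≤ divOf f P)

attribute [instance] CodingCurve.fieldF CodingCurve.fintypeF CodingCurve.fieldK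
  CodingCurve.algebraFK

namespace CodingCurve

variable (C : CodingCurve)

/-- `f` belongs to the Riemann–Roch space `L(G)`. -/
def MemL (G : C.Point →₀ ℤ) (f : C.K) : Prop :=
  f = 0 ∨ 0 ≤ C.divOf f + G

/-- The Riemann–Roch space `L(G)` as an `F`-subspace of the function field. -/
def LSub (G : C.Point →₀ ℤ) : Submodule C.F C.K where
  carrier := {f : C.K | C.MemL G f}
  add_mem' := fun hf hg => C.memL_add G _ _ hf hg
  zero_mem' := Or.inl rfl
  smul_mem' := fun c f hf => C.memL_smul G c f hf

/-- `ℓ(G)`, the dimension of the Riemann–Roch space `L(G)` over `𝔽_q`. -/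
noncomputable def ell (G : C.Point →₀ ℤ) : ℕ := Module.finrank C.F (C.LSub G)

/-- The word obtained by evaluating `f` at the points `Pt 0, ..., Pt (n-1)`. -/
def evalWord (n : ℕ) (Pt : Fin n → C.Point) (f : C.K) : Fin n → C.F :=
  fun i => C.eval (Pt i) f

end CodingCurve

section Aux

variable (C : CodingCurve)

lemma divOf_inv' (f : C.K) (hf : f ≠ 0) : C.divOf f⁻¹ = -C.divOf f := by
  have h1 := C.divOf_mul f f⁻¹ hf (inv_ne_zero hf)
  rw [mul_inv_cancel₀ hf, C.divOf_one] at h1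
  exact eq_neg_of_add_eq_zero_right h1.symm

lemma algebraMap_ne_zero' {c : C.F} (hc : c ≠ 0) : algebraMap C.F C.K c ≠ 0 := by
  intro h0
  exact hc ((algebraMap C.F C.K).injective (by rw [h0, map_zero]))

lemma divOf_smul' (c : C.F) (hc : c ≠ 0) (f : C.K) (hf : f ≠ 0) :
    C.divOf (c • f) = C.divOf f := by
  rw [Algebra.smul_def, C.divOf_mul _ _ (algebraMap_ne_zero' C hc) hf,
    C.divOf_algebraMap c hc, zero_add]

/-- ultrametric inequality, derived from closure of `L(G)` under addition -/
lemma divOf_add_ge' (f g : C.K) (hf : f ≠ 0) (hg : g ≠ 0) (hfg : f + g ≠ 0)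
    (Q : C.Point) : min (C.divOf f Q) (C.divOf g Q) ≤ C.divOf (f + g) Q := by
  set G : C.Point →₀ ℤ :=
    Finsupp.zipWith (fun x y => max (-x) (-y)) (by simp) (C.divOf f) (C.divOf g) with hG
  have hGapp : ∀ R, G R = max (-(C.divOf f R)) (-(C.divOf g R)) := fun R => rfl
  have hmf : (0 : C.Point →₀ ℤ) ≤ C.divOf f + G := by
    rw [Finsupp.le_def]; intro R
    have := hGapp R
    simp only [Finsupp.coe_zero, Pi.zero_apply, Finsupp.add_apply, this]
    omega
  have hmg : (0 : C.Point →₀ ℤ) ≤ C.divOf g + G := by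
    rw [Finsupp.le_def]; intro R
    have := hGapp R
    simp only [Finsupp.coe_zero, Pi.zero_apply, Finsupp.add_apply, this]
    omega
  have := (C.memL_add G f g (Or.inr hmf) (Or.inr hmg)).resolve_left hfg
  have h2 := Finsupp.le_def.mp this Q
  have h3 := hGapp Q
  simp only [Finsupp.coe_zero, Pi.zero_apply, Finsupp.add_apply] at h2
  omega

/-- subtracting the value kills the function at `Q` to order `≥ 1` -/
lemma sub_const' (Q : C.Point) (f : C.K) (hf : f ≠ 0) (hreg : 0 ≤ C.divOf f Q) :
    f = algebraMap C.F C.K (C.eval Q f) ∨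
      1 ≤ C.divOf (f - algebraMap C.F C.K (C.eval Q f)) Q := by
  by_cases hfa : f = algebraMap C.F C.K (C.eval Q f)
  · exact Or.inl hfa
  right
  by_cases ha : C.eval Q f = 0
  · rw [ha, map_zero, sub_zero]
    exact (C.eval_eq_zero_iff Q f hf hreg).mp ha
  · have hA : algebraMap C.F C.K (-(C.eval Q f)) ≠ 0 :=
      algebraMap_ne_zero' C (neg_ne_zero.mpr ha)
    have hrw : f - algebraMap C.F C.K (C.eval Q f)
        = f + algebraMap C.F C.K (-(C.eval Q f)) := by
      rw [map_neg, sub_eq_add_neg]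
    have hsum0 : f + algebraMap C.F C.K (-(C.eval Q f)) ≠ 0 := by
      rw [← hrw]; exact sub_ne_zero.mpr hfa
    have hAd : C.divOf (algebraMap C.F C.K (-(C.eval Q f))) Q = 0 := by
      rw [C.divOf_algebraMap _ (neg_ne_zero.mpr ha)]; rfl
    have hmin := divOf_add_ge' C f _ hf hA hsum0 Q
    rw [hAd] at hmin
    have hreg' : 0 ≤ C.divOf (f + algebraMap C.F C.K (-(C.eval Q f))) Q := by omega
    have hev : C.eval Q (f + algebraMap C.F C.K (-(C.eval Q f))) = 0 := by
      rw [C.eval_add Q _ _ hreg (le_of_eq hAd.symm), C.eval_algebraMap]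
      ring
    have := (C.eval_eq_zero_iff Q _ hsum0 hreg').mp hev
    rw [hrw]
    exact this

lemma eval_mul' (Q : C.Point) (f g : C.K) (hf0 : f ≠ 0) (hg0 : g ≠ 0)
    (hf : 0 ≤ C.divOf f Q) (hg : 0 ≤ C.divOf g Q) :
    C.eval Q (f * g) = C.eval Q f * C.eval Q g := by
  set a := C.eval Q f with haa
  set b := C.eval Q g with hbb
  have hfg0 : f * g ≠ 0 := mul_ne_zero hf0 hg0
  have hdfg : C.divOf (f * g) Q = C.divOf f Q + C.divOf g Q := by
    rw [C.divOf_mul f g hf0 hg0]; rfl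
  by_cases ha : a = 0
  · have h1 : 1 ≤ C.divOf f Q := (C.eval_eq_zero_iff Q f hf0 hf).mp ha
    have : C.eval Q (f * g) = 0 :=
      (C.eval_eq_zero_iff Q _ hfg0 (by omega)).mpr (by omega)
    rw [this, ha, zero_mul]
  by_cases hb : b = 0
  · have h1 : 1 ≤ C.divOf g Q := (C.eval_eq_zero_iff Q g hg0 hg).mp hb
    have : C.eval Q (f * g) = 0 :=
      (C.eval_eq_zero_iff Q _ hfg0 (by omega)).mpr (by omega)
    rw [this, hb, mul_zero]
  by_cases hfA : f = algebraMap C.F C.K a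
  · have : f * g = a • g := by rw [hfA, Algebra.smul_def]
    rw [this, C.eval_smul]
  by_cases hgB : g = algebraMap C.F C.K b
  · have : f * g = b • f := by rw [hgB, Algebra.smul_def]; ring
    rw [this, C.eval_smul]; ring
  have hf1 : 1 ≤ C.divOf (f - algebraMap C.F C.K a) Q :=
    (sub_const' C Q f hf0 hf).resolve_left hfA
  have hg1 : 1 ≤ C.divOf (g - algebraMap C.F C.K b) Q :=
    (sub_const' C Q g hg0 hg).resolve_left hgB
  set E : C.K := (f - algebraMap C.F C.K a) * g
      + algebraMap C.F C.K a * (g - algebraMap C.F C.K b) with hE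
  have hEeq : f * g = E + algebraMap C.F C.K (a * b) := by
    rw [hE, map_mul]; ring
  have ht1 : (f - algebraMap C.F C.K a) * g ≠ 0 :=
    mul_ne_zero (sub_ne_zero.mpr hfA) hg0
  have ht2 : algebraMap C.F C.K a * (g - algebraMap C.F C.K b) ≠ 0 :=
    mul_ne_zero (algebraMap_ne_zero' C ha) (sub_ne_zero.mpr hgB)
  have hd1 : 1 ≤ C.divOf ((f - algebraMap C.F C.K a) * g) Q := by
    have := C.divOf_mul _ g (sub_ne_zero.mpr hfA) hg0
    have h2 : C.divOf ((f - algebraMap C.F C.K a) * g) Q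
        = C.divOf (f - algebraMap C.F C.K a) Q + C.divOf g Q := by rw [this]; rfl
    omega
  have hd2 : 1 ≤ C.divOf (algebraMap C.F C.K a * (g - algebraMap C.F C.K b)) Q := by
    have := C.divOf_mul _ _ (algebraMap_ne_zero' C ha) (sub_ne_zero.mpr hgB)
    have h2 : C.divOf (algebraMap C.F C.K a * (g - algebraMap C.F C.K b)) Q
        = C.divOf (algebraMap C.F C.K a) Q
          + C.divOf (g - algebraMap C.F C.K b) Q := by rw [this]; rfl
    rw [C.divOf_algebraMap a ha] at h2
    simp only [Finsupp.coe_zero, Pi.zero_apply] at h2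
    omega
  by_cases hE0 : E = 0
  · rw [hEeq, hE0, zero_add, C.eval_algebraMap]
  have hEd : 1 ≤ C.divOf E Q := by
    rw [hE]
    have := divOf_add_ge' C _ _ ht1 ht2 (hE ▸ hE0) Q
    omega
  have hab : a * b ≠ 0 := mul_ne_zero ha hb
  have habd : C.divOf (algebraMap C.F C.K (a * b)) Q = 0 := by
    rw [C.divOf_algebraMap _ hab]; rfl
  rw [hEeq, C.eval_add Q _ _ (by omega) (le_of_eq habd.symm),
    (C.eval_eq_zero_iff Q E hE0 (by omega)).mpr hEd, C.eval_algebraMap, zero_add]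

end Aux

/-- **Feng–Rao bound.** Let `P` be a rational point of a curve over `𝔽_q`, and
let `h 0 = 0 < h 1 < h 2 < ...` enumerate the Weierstrass semigroup `H(P)`
(the set of `m` such that some rational function has pole divisor exactly
`m • P`).  Let `C_l = C_L(D, h_l • P)` be the one-point AG code obtained by
evaluating `L(h_l • P)` at `n` distinct rational points `Pt i ≠ P`, and let
`ν_l = #{(i,j) ∈ ℕ² : h i + h j = h (l+1)}`.  If `c` is a codeword in
`C_l^⊥ ∖ C_{l+1}^⊥`, then the Hamming weight of `c` is at least `ν_l`. -/
theorem feng_rao_bound (C : CodingCurve) (P : C.Point)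
    (h : ℕ → ℕ) (hmono : StrictMono h)
    (hrange : ∀ m : ℕ,
      (∃ f : C.K, f ≠ 0 ∧ 0 ≤ C.divOf f + Finsupp.single P (m : ℤ) ∧
          C.divOf f P = -(m : ℤ)) ↔ m ∈ Set.range h)
    (n : ℕ) (Pt : Fin n → C.Point) (hPt : Function.Injective Pt)
    (hne : ∀ i, Pt i ≠ P) (l : ℕ) (c : Fin n → C.F)
    (hc : ∀ f : C.K, C.MemL (Finsupp.single P (h l : ℤ)) f →
      ∑ i, C.eval (Pt i) f * c i = 0)
    (hc' : ¬ ∀ f : C.K, C.MemL (Finsupp.single P (h (l + 1) : ℤ)) f →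
      ∑ i, C.eval (Pt i) f * c i = 0) :
    ({p : ℕ × ℕ | h p.1 + h p.2 = h (l + 1)} : Set (ℕ × ℕ)).ncard ≤
      ({i : Fin n | c i ≠ 0} : Set (Fin n)).ncard := by
    classical
  -- choose functions `f i` with exact pole order `h i` at `P`
  have hfex : ∀ i : ℕ, ∃ f : C.K, f ≠ 0 ∧
      0 ≤ C.divOf f + Finsupp.single P ((h i : ℤ)) ∧ C.divOf f P = -(h i : ℤ) :=
    fun i => (hrange (h i)).mpr ⟨i, rfl⟩
  choose f hf0 hfL hfP using hfex
  -- regularity away from `P`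
  have hreg : ∀ (m : ℕ) (g : C.K), 0 ≤ C.divOf g + Finsupp.single P (m : ℤ) →
      ∀ Q, Q ≠ P → 0 ≤ C.divOf g Q := by
    intro m g hgL Q hQ
    have h1 := Finsupp.le_def.mp hgL Q
    simp only [Finsupp.coe_zero, Pi.zero_apply, Finsupp.add_apply,
      Finsupp.single_eq_of_ne' (Ne.symm hQ)] at h1
    omega
  -- additivity of the pairing with `c`
  have hφadd : ∀ g₁ g₂ : C.K, (∀ Q, Q ≠ P → 0 ≤ C.divOf g₁ Q) →
      (∀ Q, Q ≠ P → 0 ≤ C.divOf g₂ Q) →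
      (∑ i, C.eval (Pt i) (g₁ + g₂) * c i)
        = (∑ i, C.eval (Pt i) g₁ * c i) + (∑ i, C.eval (Pt i) g₂ * c i) := by
    intro g₁ g₂ h1 h2
    rw [← Finset.sum_add_distrib]
    refine Finset.sum_congr rfl fun k _ => ?_
    rw [C.eval_add _ _ _ (h1 _ (hne k)) (h2 _ (hne k)), add_mul]
  have hφsmul : ∀ (a : C.F) (g : C.K),
      (∑ i, C.eval (Pt i) (a • g) * c i) = a * ∑ i, C.eval (Pt i) g * c i := by
    intro a g
    rw [Finset.mul_sum]
    refine Finset.sum_congr rfl fun k _ => ?_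
    rw [C.eval_smul]; ring
  -- "drop" lemma : a function of pole order `< h (l+1)` lies in `L(h l • P)`
  have hdrop : ∀ g : C.K, g ≠ 0 → 0 ≤ C.divOf g + Finsupp.single P ((h (l+1) : ℤ)) →
      -(h (l+1) : ℤ) < C.divOf g P →
      0 ≤ C.divOf g + Finsupp.single P ((h l : ℤ)) := by
    intro g hg hgL hgP
    have hPle : -(h l : ℤ) ≤ C.divOf g P := by
      by_cases hm : 0 ≤ C.divOf g P
      · have : (0:ℤ) ≤ (h l : ℤ) := Int.ofNat_nonneg _
        omega
      · push_neg at hm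
        obtain ⟨m, hmz⟩ : ∃ m : ℕ, (m : ℤ) = -(C.divOf g P) :=
          ⟨(-(C.divOf g P)).toNat, Int.toNat_of_nonneg (by omega)⟩
        have hmem : m ∈ Set.range h := by
          refine (hrange m).mp ⟨g, hg, ?_, by omega⟩
          rw [Finsupp.le_def]; intro Q
          by_cases hQ : Q = P
          · subst hQ
            simp only [Finsupp.coe_zero, Pi.zero_apply, Finsupp.add_apply,
              Finsupp.single_eq_same]
            omega
          · have := hreg (h (l+1)) g hgL Q hQ
            simp only [Finsupp.coe_zero, Pi.zero_apply, Finsupp.add_apply,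
              Finsupp.single_eq_of_ne' (Ne.symm hQ)]
            omega
        obtain ⟨k, hk⟩ := hmem
        have hlt : h k < h (l+1) := by omega
        have hkle : k ≤ l := by
          by_contra hkl
          exact absurd (hmono.monotone (by omega : l + 1 ≤ k)) (by omega)
        have := hmono.monotone hkle
        omega
    rw [Finsupp.le_def]; intro Q
    by_cases hQ : Q = P
    · subst hQ
      simp only [Finsupp.coe_zero, Pi.zero_apply, Finsupp.add_apply,
        Finsupp.single_eq_same]
      omega
    · have := hreg (h (l+1)) g hgL Q hQ
      simp only [Finsupp.coe_zero, Pi.zero_apply, Finsupp.add_apply,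
        Finsupp.single_eq_of_ne' (Ne.symm hQ)]
      omega
  -- the pairing vanishes on functions of pole order `< h (l+1)`
  have hvanish : ∀ g : C.K, g ≠ 0 →
      0 ≤ C.divOf g + Finsupp.single P ((h (l+1) : ℤ)) →
      -(h (l+1) : ℤ) < C.divOf g P → (∑ i, C.eval (Pt i) g * c i) = 0 :=
    fun g hg hL hP => hc g (Or.inr (hdrop g hg hL hP))
  -- the pairing does NOT vanish on functions of pole order exactly `h (l+1)`
  have hkey : ∀ g : C.K, g ≠ 0 →
      0 ≤ C.divOf g + Finsupp.single P ((h (l+1) : ℤ)) →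
      C.divOf g P = -(h (l+1) : ℤ) → (∑ i, C.eval (Pt i) g * c i) ≠ 0 := by
    intro g hg hgL hgP
    push_neg at hc'
    obtain ⟨f₀, hf₀L, hf₀φ⟩ := hc'
    have hf₀0 : f₀ ≠ 0 := by
      rintro rfl
      exact hf₀φ (by simp [C.eval_zero])
    have hf₀L' : 0 ≤ C.divOf f₀ + Finsupp.single P ((h (l+1) : ℤ)) :=
      hf₀L.resolve_left hf₀0
    have hf₀P : C.divOf f₀ P = -(h (l+1) : ℤ) := by
      by_contra hne'
      have hge : -(h (l+1) : ℤ) ≤ C.divOf f₀ P := by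
        have := Finsupp.le_def.mp hf₀L' P
        simp only [Finsupp.coe_zero, Pi.zero_apply, Finsupp.add_apply,
          Finsupp.single_eq_same] at this
        omega
      exact hf₀φ (hvanish f₀ hf₀0 hf₀L' (lt_of_le_of_ne hge (Ne.symm hne')))
    set q := g * f₀⁻¹ with hq
    have hq0 : q ≠ 0 := mul_ne_zero hg (inv_ne_zero hf₀0)
    have hqP : C.divOf q P = 0 := by
      have h2 : C.divOf q P = C.divOf g P + C.divOf f₀⁻¹ P := by
        rw [hq, C.divOf_mul _ _ hg (inv_ne_zero hf₀0)]; rfl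
      rw [divOf_inv' C f₀ hf₀0] at h2
      simp only [Finsupp.neg_apply] at h2
      omega
    set a := C.eval P q with haq
    have ha : a ≠ 0 := by
      intro h0
      have := (C.eval_eq_zero_iff P q hq0 (le_of_eq hqP.symm)).mp h0
      omega
    have hgq : g = q * f₀ := by
      rw [hq]; field_simp
    by_cases hqA : q = algebraMap C.F C.K a
    · have hga : g = a • f₀ := by rw [hgq, hqA, Algebra.smul_def]
      rw [hga, hφsmul]
      exact mul_ne_zero ha hf₀φ
    have h1 : 1 ≤ C.divOf (q - algebraMap C.F C.K a) P :=
      (sub_const' C P q hq0 (le_of_eq hqP.symm)).resolve_left hqA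
    set r := g - a • f₀ with hrdef
    have hr : r = (q - algebraMap C.F C.K a) * f₀ := by
      rw [hrdef, Algebra.smul_def, hgq]; ring
    have hr0 : r ≠ 0 := by
      rw [hr]; exact mul_ne_zero (sub_ne_zero.mpr hqA) hf₀0
    have hrP : -(h (l+1) : ℤ) < C.divOf r P := by
      have h2 : C.divOf r P
          = C.divOf (q - algebraMap C.F C.K a) P + C.divOf f₀ P := by
        rw [hr, C.divOf_mul _ _ (sub_ne_zero.mpr hqA) hf₀0]; rfl
      omega
    have hrL : 0 ≤ C.divOf r + Finsupp.single P ((h (l+1) : ℤ)) := by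
      have hmem := C.memL_add (Finsupp.single P ((h (l+1) : ℤ))) g ((-a) • f₀)
        (Or.inr hgL) (C.memL_smul _ (-a) f₀ (Or.inr hf₀L'))
      have hre : g + (-a) • f₀ = r := by
        rw [hrdef, neg_smul, ← sub_eq_add_neg]
      rw [hre] at hmem
      exact hmem.resolve_left hr0
    have hφr : (∑ i, C.eval (Pt i) r * c i) = 0 := hvanish r hr0 hrL hrP
    have hgsum : g = r + a • f₀ := by rw [hrdef]; ring
    have hregr := hreg (h (l+1)) r hrL
    have hregaf : ∀ Q, Q ≠ P → 0 ≤ C.divOf (a • f₀) Q := by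
      intro Q hQ
      rw [divOf_smul' C a ha f₀ hf₀0]
      exact hreg (h (l+1)) f₀ hf₀L' Q hQ
    rw [hgsum, hφadd r (a • f₀) hregr hregaf, hφr, hφsmul, zero_add]
    exact mul_ne_zero ha hf₀φ
  -- facts about the products `f i * f j`
  have hprod0 : ∀ i j : ℕ, f i * f j ≠ 0 := fun i j => mul_ne_zero (hf0 i) (hf0 j)
  have hprodP : ∀ i j : ℕ, C.divOf (f i * f j) P = -((h i : ℤ) + (h j : ℤ)) := by
    intro i j
    have h2 : C.divOf (f i * f j) P = C.divOf (f i) P + C.divOf (f j) P := by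
      rw [C.divOf_mul _ _ (hf0 i) (hf0 j)]; rfl
    rw [h2, hfP i, hfP j]; ring
  have hprodL : ∀ i j : ℕ, h i + h j ≤ h (l+1) →
      0 ≤ C.divOf (f i * f j) + Finsupp.single P ((h (l+1) : ℤ)) := by
    intro i j hle
    rw [Finsupp.le_def]; intro Q
    by_cases hQ : Q = P
    · subst hQ
      have := hprodP i j
      simp only [Finsupp.coe_zero, Pi.zero_apply, Finsupp.add_apply,
        Finsupp.single_eq_same]
      omega
    · have h1 := hreg (h i) (f i) (hfL i) Q hQ
      have h2 := hreg (h j) (f j) (hfL j) Q hQ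
      have h3 : C.divOf (f i * f j) Q = C.divOf (f i) Q + C.divOf (f j) Q := by
        rw [C.divOf_mul _ _ (hf0 i) (hf0 j)]; rfl
      simp only [Finsupp.coe_zero, Pi.zero_apply, Finsupp.add_apply,
        Finsupp.single_eq_of_ne' (Ne.symm hQ)]
      omega
  -- diagonal and off-diagonal values of the pairing matrix
  have hdiag : ∀ p : ℕ × ℕ, h p.1 + h p.2 = h (l+1) →
      (∑ i, C.eval (Pt i) (f p.1 * f p.2) * c i) ≠ 0 := by
    intro p hp
    refine hkey _ (hprod0 _ _) (hprodL _ _ (le_of_eq hp)) ?_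
    rw [hprodP]
    omega
  have hoff : ∀ p p' : ℕ × ℕ, h p.1 + h p.2 = h (l+1) → h p'.1 + h p'.2 = h (l+1) →
      p.1 < p'.1 → (∑ i, C.eval (Pt i) (f p.1 * f p'.2) * c i) = 0 := by
    intro p p' hp hp' hlt
    have hmlt : h p.1 < h p'.1 := hmono hlt
    have hlt2 : h p.1 + h p'.2 < h (l+1) := by omega
    refine hvanish _ (hprod0 _ _) (hprodL _ _ (le_of_lt hlt2)) ?_
    rw [hprodP]
    omega
  -- finiteness of the index set
  have hSfin : ({p : ℕ × ℕ | h p.1 + h p.2 = h (l + 1)} : Set (ℕ × ℕ)).Finite := by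
    apply Set.Finite.subset ((Set.finite_Iic (l+1)).prod (Set.finite_Iic (l+1)))
    rintro ⟨i, j⟩ hij
    have hij' : h i + h j = h (l + 1) := hij
    constructor
    · exact Set.mem_Iic.mpr (hmono.le_iff_le.mp (show h i ≤ h (l + 1) by omega))
    · exact Set.mem_Iic.mpr (hmono.le_iff_le.mp (show h j ≤ h (l + 1) by omega))
  haveI hSfintype :
      Fintype ({p : ℕ × ℕ | h p.1 + h p.2 = h (l + 1)} : Set (ℕ × ℕ)) :=
    hSfin.fintype
  set W : Set (Fin n) := {i : Fin n | c i ≠ 0} with hW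
  set S : Set (ℕ × ℕ) := {p : ℕ × ℕ | h p.1 + h p.2 = h (l + 1)} with hS
  have hSmem : ∀ p : S, h (p : ℕ × ℕ).1 + h (p : ℕ × ℕ).2 = h (l+1) := by
    intro p
    exact p.2
  -- restriction of sums to the support of `c`
  have hsumW : ∀ g : Fin n → C.F, (∑ k : W, g k * c k) = ∑ k : Fin n, g k * c k := by
    intro g
    rw [show (∑ k : W, g ↑k * c ↑k) = ∑ k ∈ W.toFinset, g k * c k from
      Finset.sum_set_coe (f := fun k => g k * c k) W]
    apply Finset.sum_subset (Finset.subset_univ _)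
    intro k _ hk
    rw [Set.mem_toFinset, hW] at hk
    simp only [Set.mem_setOf_eq, not_not] at hk
    rw [hk, mul_zero]
  -- the pairing computation
  have hpair : ∀ p p' : ℕ × ℕ,
      (∑ k : W, C.eval (Pt k) (f p.1) * (C.eval (Pt k) (f p'.2) * c k))
        = ∑ i, C.eval (Pt i) (f p.1 * f p'.2) * c i := by
    intro p p'
    have hmul : ∀ k : Fin n, C.eval (Pt k) (f p.1) * C.eval (Pt k) (f p'.2)
        = C.eval (Pt k) (f p.1 * f p'.2) := fun k =>
      (eval_mul' C (Pt k) _ _ (hf0 _) (hf0 _)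
        (hreg _ _ (hfL _) _ (hne k)) (hreg _ _ (hfL _) _ (hne k))).symm
    calc (∑ k : W, C.eval (Pt k) (f p.1) * (C.eval (Pt k) (f p'.2) * c k))
        = ∑ k : W, (C.eval (Pt k) (f p.1 * f p'.2)) * c k := by
          refine Finset.sum_congr rfl fun k _ => ?_
          rw [← mul_assoc, hmul]
      _ = ∑ k : Fin n, (C.eval (Pt k) (f p.1 * f p'.2)) * c k :=
          hsumW fun k => C.eval (Pt k) (f p.1 * f p'.2)
  -- the vectors
  set v : S → (W → C.F) := fun p k => C.eval (Pt k) (f (p : ℕ × ℕ).1) with hv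
  have hli : LinearIndependent C.F v := by
    rw [Fintype.linearIndependent_iff]
    intro t ht
    by_contra hex
    push_neg at hex
    obtain ⟨p₁, hp₁⟩ := hex
    obtain ⟨p₀, hp₀mem, hp₀max⟩ := Finset.exists_max_image
      (Finset.univ.filter fun p : S => t p ≠ 0) (fun p => (p : ℕ × ℕ).1)
      ⟨p₁, by simp [hp₁]⟩
    rw [Finset.mem_filter] at hp₀mem
    have hp₀ne : t p₀ ≠ 0 := hp₀mem.2
    have happ : (∑ k : W, (∑ p : S, t p • v p) k
        * (C.eval (Pt k) (f (p₀ : ℕ × ℕ).2) * c k)) = 0 := by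
      rw [ht]
      simp
    have hswap : (∑ k : W, (∑ p : S, t p • v p) k
          * (C.eval (Pt k) (f (p₀ : ℕ × ℕ).2) * c k))
        = ∑ p : S, t p * ∑ i, C.eval (Pt i) (f (p : ℕ × ℕ).1 * f (p₀ : ℕ × ℕ).2) * c i := by
      have hap : ∀ k : W, (∑ p : S, t p • v p) k = ∑ p : S, t p * v p k := by
        intro k
        rw [Finset.sum_apply]
        simp [Pi.smul_apply, smul_eq_mul]
      calc (∑ k : W, (∑ p : S, t p • v p) k * (C.eval (Pt k) (f (p₀:ℕ×ℕ).2) * c k))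
          = ∑ k : W, ∑ p : S, t p * v p k * (C.eval (Pt k) (f (p₀:ℕ×ℕ).2) * c k) := by
            refine Finset.sum_congr rfl fun k _ => ?_
            rw [hap k, Finset.sum_mul]
        _ = ∑ p : S, ∑ k : W, t p * v p k * (C.eval (Pt k) (f (p₀:ℕ×ℕ).2) * c k) :=
            Finset.sum_comm
        _ = ∑ p : S, t p * ∑ k : W, v p k * (C.eval (Pt k) (f (p₀:ℕ×ℕ).2) * c k) := by
            refine Finset.sum_congr rfl fun p _ => ?_
            rw [Finset.mul_sum]
            refine Finset.sum_congr rfl fun k _ => ?_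
            ring
        _ = ∑ p : S, t p * ∑ i, C.eval (Pt i) (f (p:ℕ×ℕ).1 * f (p₀:ℕ×ℕ).2) * c i := by
            refine Finset.sum_congr rfl fun p _ => ?_
            rw [hv]
            rw [hpair]
    rw [hswap] at happ
    have hsingle : (∑ p : S, t p * ∑ i, C.eval (Pt i) (f (p:ℕ×ℕ).1 * f (p₀:ℕ×ℕ).2) * c i)
        = t p₀ * ∑ i, C.eval (Pt i) (f (p₀:ℕ×ℕ).1 * f (p₀:ℕ×ℕ).2) * c i := by
      apply Finset.sum_eq_single
      · intro p _ hpne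
        by_cases htp : t p = 0
        · rw [htp, zero_mul]
        · have hple : (p : ℕ×ℕ).1 ≤ (p₀ : ℕ×ℕ).1 :=
            hp₀max p (Finset.mem_filter.mpr ⟨Finset.mem_univ _, htp⟩)
          have hplt : (p : ℕ×ℕ).1 < (p₀ : ℕ×ℕ).1 := by
            rcases lt_or_eq_of_le hple with h' | h'
            · exact h'
            · exfalso
              apply hpne
              have e1 := hSmem p
              have e2 := hSmem p₀
              have h2 : (p : ℕ×ℕ).2 = (p₀ : ℕ×ℕ).2 := by
                rw [h'] at e1
                exact hmono.injective (by omega)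
              exact Subtype.ext (Prod.ext h' h2)
          rw [hoff _ _ (hSmem p) (hSmem p₀) hplt, mul_zero]
      · intro hnm
        exact absurd (Finset.mem_univ p₀) hnm
    rw [hsingle] at happ
    exact hp₀ne ((mul_eq_zero.mp happ).resolve_right (hdiag _ (hSmem p₀)))
  have hcard := hli.fintype_card_le_finrank
  rw [Module.finrank_pi] at hcard
  rw [← Nat.card_coe_set_eq, ← Nat.card_coe_set_eq,
    Nat.card_eq_fintype_card, Nat.card_eq_fintype_card]
  exact hcard
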